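/- Let M be an automorphism of a finite-dimensional vector space V over an algebraically closed field k of characteristic not 2, and suppose M preserves a non-degenerate symmetric bilinear form on V. Then for every λ ∈ k* with λ ≠ λ^{-1} and every m ≥ 1, the number of Jordan blocks of M of size m with eigenvalue λ equals the number of Jordan blocks of size m with eigenvalue λ^{-1}. -/

import Mathlib

open LinearMap Module

section Aux
variable {k V : Type*} [Field k] [AddCommGroup V] [Module k V] [FiniteDimensional k V]

/-- If `B` is adjoint to `A` w.r.t. a (left-)nondegenerate bilinear form, then
their kernels have the same dimension. -/
lemma finrank_ker_eq_of_adjoint (Ψ : V →ₗ[k] V →ₗ[k] k)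
    (hnd : ∀ u : V, (∀ v : V, Ψ u v = 0) → u = 0)
    (A B : V →ₗ[k] V) (h : ∀ u v, Ψ (A u) v = Ψ u (B v)) :
    finrank k (ker A) = finrank k (ker B) := by
  have hinj : Function.Injective Ψ := by
    rw [← LinearMap.ker_eq_bot, LinearMap.ker_eq_bot']
    intro u hu
    exact hnd u (fun v => by rw [hu]; rfl)
  let e : V ≃ₗ[k] Module.Dual k V :=
    Ψ.linearEquivOfInjective hinj (Subspace.dual_finrank_eq (K := k) (V := V)).symm
  have he : ∀ u, e u = Ψ u := fun u => Ψ.linearEquivOfInjective_apply hinj _ u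
  have hker : ker A = Submodule.comap (e : V →ₗ[k] Module.Dual k V) (ker B.dualMap) := by
    ext x
    simp only [LinearMap.mem_ker, Submodule.mem_comap, LinearEquiv.coe_coe]
    constructor
    · intro hx
      ext v
      simp [he, ← h, hx]
    · intro hx
      have : ∀ v, Ψ (A x) v = 0 := by
        intro v
        have := congrArg (fun f => f v) hx
        simpa [he, ← h] using this
      exact hnd _ this
  have h1 : finrank k (ker A) = finrank k (ker B.dualMap) := by
    rw [hker, Submodule.comap_equiv_eq_map_symm]
    exact LinearEquiv.finrank_map_eq e.symm _
  have h2 := B.dualMap.finrank_range_add_finrank_ker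
  have h3 := B.finrank_range_add_finrank_ker
  rw [B.finrank_range_dualMap_eq_finrank_range, Subspace.dual_finrank_eq] at h2
  omega

/-- The dimensions of kernels of powers of `M - λ` and `M - λ⁻¹` agree for an
automorphism preserving a nondegenerate bilinear form. -/
lemma key_dim (M : V ≃ₗ[k] V) (Ψ : V →ₗ[k] V →ₗ[k] k)
    (hnd : ∀ u : V, (∀ v : V, Ψ u v = 0) → u = 0)
    (hM : ∀ u v, Ψ (M u) (M v) = Ψ u v) (l : k) (hl0 : l ≠ 0) (n : ℕ) :
    finrank k (ker (((M : V →ₗ[k] V) - l • 1) ^ n))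
      = finrank k (ker (((M : V →ₗ[k] V) - l⁻¹ • 1) ^ n)) := by
  set a : V →ₗ[k] V := (M.symm : V →ₗ[k] V) with ha
  set f : V →ₗ[k] V := (M : V →ₗ[k] V) - l • 1 with hf
  set g : V →ₗ[k] V := a - l • 1 with hg
  set hmap : V →ₗ[k] V := (M : V →ₗ[k] V) - l⁻¹ • 1 with hh
  -- `a = M⁻¹` is adjoint to `M`
  have hMadj : ∀ u v, Ψ ((M : V →ₗ[k] V) u) v = Ψ u (a v) := by
    intro u v
    calc Ψ (M u) v = Ψ (M u) (M (M.symm v)) := by rw [M.apply_symm_apply]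
    _ = Ψ u (M.symm v) := hM u _
    _ = Ψ u (a v) := rfl
  have hadj : ∀ u v, Ψ (f u) v = Ψ u (g v) := by
    intro u v
    simp only [hf, hg, LinearMap.sub_apply, LinearMap.smul_apply, Module.End.one_apply, map_sub, map_smul,
      LinearMap.sub_apply, LinearMap.smul_apply, hMadj]
  have hadjn : ∀ u v, Ψ ((f ^ n) u) v = Ψ u ((g ^ n) v) := by
    induction n with
    | zero => intro u v; simp
    | succ n ih =>
      intro u v
      rw [pow_succ', pow_succ]
      simp only [Module.End.mul_eq_comp, comp_apply]
      rw [hadj, ih]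
  have step1 : finrank k (ker (f ^ n)) = finrank k (ker (g ^ n)) :=
    finrank_ker_eq_of_adjoint Ψ hnd _ _ hadjn
  -- `g = (-l) • (a * hmap)`
  have haMone : a * (M : V →ₗ[k] V) = 1 := by
    ext x; simp [a, Module.End.mul_eq_comp]
  have hMaone : (M : V →ₗ[k] V) * a = 1 := by
    ext x; simp [a, Module.End.mul_eq_comp]
  have hli : l * l⁻¹ = 1 := mul_inv_cancel₀ hl0
  have hgfact : g = (-l) • (a * hmap) := by
    ext x
    simp only [hg, hh, ha, LinearMap.smul_apply, Module.End.mul_eq_comp, comp_apply, LinearMap.sub_apply,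
      Module.End.one_apply, map_sub, map_smul, LinearEquiv.coe_coe, LinearEquiv.symm_apply_apply,
      smul_sub, smul_smul, neg_mul, hli]
    module
  have hcomm : Commute a hmap := by
    show a * hmap = hmap * a
    ext x
    simp [hh, ha, Module.End.mul_eq_comp, map_sub, map_smul]
  have hgn : g ^ n = ((-l) ^ n) • (a ^ n * hmap ^ n) := by
    rw [hgfact, smul_pow, hcomm.mul_pow]
  have hln : (-l) ^ n ≠ 0 := pow_ne_zero _ (neg_ne_zero.mpr hl0)
  have hkera : ker (a ^ n) = ⊥ := by
    rw [LinearMap.ker_eq_bot]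
    have : Function.Injective a := M.symm.injective
    rw [Module.End.coe_pow]
    exact this.iterate n
  have hkerg : ker (g ^ n) = ker (hmap ^ n) := by
    rw [hgn, LinearMap.ker_smul _ _ hln, Module.End.mul_eq_comp, LinearMap.ker_comp, hkera,
      Submodule.comap_bot]
  rw [step1, hkerg]

end Aux

/-- The number of Jordan blocks of `M` of eigenvalue `l` and size `m`
(computed, as an integer, from the dimensions of the kernels of powers of
`M - l·id`). -/
noncomputable def jordanBlockCount {k V : Type*} [Field k] [AddCommGroup V]
    [Module k V] (M : V →ₗ[k] V) (l : k) (m : ℕ) : ℤ :=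
  2 * (Module.finrank k (LinearMap.ker ((M - l • (1 : V →ₗ[k] V)) ^ m)) : ℤ)
    - (Module.finrank k (LinearMap.ker ((M - l • (1 : V →ₗ[k] V)) ^ (m - 1))) : ℤ)
    - (Module.finrank k (LinearMap.ker ((M - l • (1 : V →ₗ[k] V)) ^ (m + 1))) : ℤ)

/-- If an automorphism `M` of a finite-dimensional space over an algebraically
closed field of characteristic not 2 preserves a non-degenerate symmetric
bilinear form, then for `λ ≠ λ⁻¹` the numbers of Jordan blocks of size `m`
with eigenvalues `λ` and `λ⁻¹` agree. -/
theorem jordan_blocks_inverse_eigenvalues {k V : Type*} [Field k]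
    [IsAlgClosed k] [AddCommGroup V] [Module k V] [FiniteDimensional k V]
    (hchar : (2 : k) ≠ 0) (M : V ≃ₗ[k] V)
    (Ψ : V →ₗ[k] V →ₗ[k] k)
    (hsymm : ∀ u v, Ψ u v = Ψ v u)
    (hnd : ∀ u : V, (∀ v : V, Ψ u v = 0) → u = 0)
    (hM : ∀ u v, Ψ (M u) (M v) = Ψ u v)
    (l : k) (hl0 : l ≠ 0) (hl : l ≠ l⁻¹) (m : ℕ) (hm : 1 ≤ m) :
    jordanBlockCount (M : V →ₗ[k] V) l m = jordanBlockCount (M : V →ₗ[k] V) l⁻¹ m := by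
  unfold jordanBlockCount
  rw [key_dim M Ψ hnd hM l hl0 m, key_dim M Ψ hnd hM l hl0 (m - 1),
    key_dim M Ψ hnd hM l hl0 (m + 1)]
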